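/- Let x ∈ ℂ^N and H = x h* + h x* for some h ∈ ℂ^N, with x ≠ 0. If H = 0 then h = i c x for some real constant c. -/
import Mathlib


open Matrix

/-- If `x ≠ 0` and `x h* + h x* = 0`, then `h = i c x` for some real `c`. -/
theorem tangent_space_kernel (N : ℕ) (x h : Fin N → ℂ) (hx : x ≠ 0)
    (hH : vecMulVec x (star h) + vecMulVec h (star x) = 0) :
    ∃ c : ℝ, h = fun i => Complex.I * (c : ℂ) * x i := by
  obtain ⟨i0, hi0⟩ : ∃ i, x i ≠ 0 := by
    by_contra hcon
    push_neg at hcon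
    exact hx (funext hcon)
  have key : ∀ i j, x i * star (h j) + h i * star (x j) = 0 := by
    intro i j
    have := congrFun (congrFun hH i) j
    simpa [vecMulVec_apply] using this
  have hxs : star (x i0) ≠ 0 := star_ne_zero.mpr hi0
  set lam : ℂ := - star (h i0) / star (x i0) with hlam
  have hform : ∀ i, h i = lam * x i := by
    intro i
    have hk := key i i0
    rw [hlam, div_mul_eq_mul_div, eq_div_iff hxs]
    linear_combination hk
  have hdiag := key i0 i0
  rw [hform i0] at hdiag
  have hre : star lam + lam = 0 := by
    have hne : x i0 * star (x i0) ≠ 0 := mul_ne_zero hi0 hxs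
    have : (star lam + lam) * (x i0 * star (x i0)) = 0 := by
      rw [star_mul'] at hdiag
      linear_combination hdiag
    exact (mul_eq_zero.mp this).resolve_right hne
  have hre0 : lam.re = 0 := by
    have := congrArg Complex.re hre
    simp [Complex.add_re, Complex.conj_re] at this
    linarith
  refine ⟨lam.im, funext fun i => ?_⟩
  rw [hform i]
  congr 1
  apply Complex.ext <;> simp [hre0]
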